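/- Suppose JA is an affine map. Then for all γ ∈ (0,1) and λ ∈ (0,1], RAγ∘T(Aγ,Bγ) − T(Bγ,Aγ)∘RAγ = 2γ·(JA∘T(Aγ,Bγ) − (1−λ)·JA − λ·JA∘RBγ∘RAγ), i.e. for every x ∈ X, RAγ(T(Aγ,Bγ)(x)) − T(Bγ,Aγ)(RAγ(x)) = 2γ·(JA(T(Aγ,Bγ)(x)) − (1−λ)·JA(x) − λ·JA(RBγ(RAγ(x)))). -/
import Mathlib

theorem aacaStmt9 {X : Type*} [NormedAddCommGroup X] [InnerProductSpace ℝ X] [CompleteSpace X]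
    (JA JB : X → X)
    (hJA : ∀ (x y : X) (t : ℝ), JA (t • x + (1 - t) • y) = t • JA x + (1 - t) • JA y)
    (w : X) (γ lam : ℝ)
    (hγ : γ ∈ Set.Ioo (0 : ℝ) 1) (hlam : lam ∈ Set.Ioc (0 : ℝ) 1)
    (RAγ RBγ TAγBγ TBγAγ : X → X)
    (hRAγ : ∀ x, RAγ x = (2 * γ) • JA x + (2 * (1 - γ)) • w - x)
    (hRBγ : ∀ x, RBγ x = (2 * γ) • JB x + (2 * (1 - γ)) • w - x)
    (hTAB : ∀ x, TAγBγ x = (1 - lam) • x + lam • RBγ (RAγ x))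
    (hTBA : ∀ x, TBγAγ x = (1 - lam) • x + lam • RAγ (RBγ x)) :
    ∀ x : X, RAγ (TAγBγ x) - TBγAγ (RAγ x)
      = (2 * γ) • (JA (TAγBγ x) - (1 - lam) • JA x - lam • JA (RBγ (RAγ x))) := by
  intro x
  rw [hTBA, hRAγ (TAγBγ x), hRAγ (RBγ (RAγ x)), hTAB, hRAγ x]
  module
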